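/- Let A be a real n×d matrix and let D : ℝ^n → ℝ be differentiable with −D (1/β)-strongly convex (β > 0). Let x, x̄ ∈ ℝ^d, g ∈ ℝ^n, δ > 0, I ⊆ {1,…,n}, and let y, y⁺ ∈ ℝ^n satisfy: y⁺_i = y_i for i ∉ I; y⁺_i − y_i = δ((1/n)(A x)_i − g_i) for i ∈ I; and ∇D(y⁺) = (1/n)A x̄ − g. Then D(y) − D(y⁺) ≤ −⟨(1/n)A(x̄ − x), y⁺ − y⟩ − (1/δ + 1/(2β))‖y⁺ − y‖². -/

import Mathlib

open RealInnerProductSpace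

theorem stmt_8 {n d : ℕ} (a : Fin n → EuclideanSpace ℝ (Fin d))
    (D : EuclideanSpace ℝ (Fin n) → ℝ)
    (D' : EuclideanSpace ℝ (Fin n) → EuclideanSpace ℝ (Fin n))
    (β : ℝ) (hβ : 0 < β)
    (hDdiff : ∀ y, HasGradientAt D (D' y) y)
    (hDsc : ∀ u v, (-D u) + ⟪-D' u, v - u⟫ + (1 / β) / 2 * ‖v - u‖ ^ 2 ≤ -D v)
    (x xbar : EuclideanSpace ℝ (Fin d)) (g : Fin n → ℝ)
    (δ : ℝ) (hδ : 0 < δ) (I : Finset (Fin n))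
    (y yplus : EuclideanSpace ℝ (Fin n))
    (hout : ∀ i ∉ I, yplus i = y i)
    (hin : ∀ i ∈ I, yplus i - y i = δ * ((1 / n : ℝ) * ⟪a i, x⟫ - g i))
    (hgrad : ∀ i, D' yplus i = (1 / n : ℝ) * ⟪a i, xbar⟫ - g i) :
    D y - D yplus ≤
      -(∑ i, (1 / n : ℝ) * ⟪a i, xbar - x⟫ * (yplus i - y i)) -
        (1 / δ + 1 / (2 * β)) * ‖yplus - y‖ ^ 2 := by
  have key := hDsc yplus y
  have hnorm : ‖y - yplus‖ = ‖yplus - y‖ := norm_sub_rev _ _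
  have hS : ‖yplus - y‖ ^ 2 = ∑ i, (yplus i - y i) ^ 2 := by
    rw [← real_inner_self_eq_norm_sq, PiLp.inner_apply]
    refine Finset.sum_congr rfl fun i _ => ?_
    simp [PiLp.sub_apply, sq]
  have hinner : ⟪-D' yplus, y - yplus⟫ =
      ∑ i, -(((1 / n : ℝ) * ⟪a i, xbar⟫ - g i) * (y i - yplus i)) := by
    rw [PiLp.inner_apply]
    refine Finset.sum_congr rfl fun i _ => ?_
    simp [PiLp.sub_apply, PiLp.neg_apply, hgrad i]
    ring
  have hsum : ∑ i, -(((1 / n : ℝ) * ⟪a i, xbar⟫ - g i) * (y i - yplus i)) =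
      ∑ i, ((1 / n : ℝ) * ⟪a i, xbar - x⟫ * (yplus i - y i)
        + (1 / δ) * (yplus i - y i) ^ 2) := by
    refine Finset.sum_congr rfl fun i _ => ?_
    rw [inner_sub_right]
    by_cases hi : i ∈ I
    · have h := hin i hi
      have hδ' : δ ≠ 0 := ne_of_gt hδ
      have hc : (1 / n : ℝ) * ⟪a i, x⟫ - g i = (yplus i - y i) / δ := by
        field_simp [h]
        rw [h]; ring
      have : (1 / n : ℝ) * ⟪a i, xbar⟫ - g i
          = (1 / n : ℝ) * (⟪a i, xbar⟫ - ⟪a i, x⟫) + (yplus i - y i) / δ := by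
        rw [← hc]; ring
      rw [this]
      field_simp
      ring
    · have h := hout i hi
      rw [h]
      ring
  rw [hinner, hsum, Finset.sum_add_distrib, ← Finset.mul_sum, ← hS, hnorm] at key
  have h2 : 1 / β / 2 = 1 / (2 * β) := by ring
  rw [h2] at key
  linarith
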